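/- There is no unit-speed spacelike plane curve (τ ≡ 0) in E₁³ with spacelike principal normal (ε = +1) and nonvanishing curvature whose tangent vector makes a constant Lorentzian timelike angle with a fixed spacelike straight line; precisely, if ψ is a unit-speed spacelike curve with Frenet frame satisfying T' = κN, N' = -κT, B' = 0 with g(N,N)=1, g(B,B)=-1, κ nonvanishing, and d is a fixed unit spacelike vector with g(d, T(s)) = n constant and |n| > 1, then a contradiction follows. -/

import Mathlib

noncomputable section
open Real

/-- Lorentzian metric of Minkowski 3-space E₁³. -/
def g (u v : ℝ × ℝ × ℝ) : ℝ := -(u.1 * v.1) + u.2.1 * v.2.1 + u.2.2 * v.2.2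

lemma gd_hasDeriv (d : ℝ × ℝ × ℝ) {f : ℝ → ℝ × ℝ × ℝ} {f' : ℝ × ℝ × ℝ} {s : ℝ}
    (h : HasDerivAt f f' s) :
    HasDerivAt (fun t => g d (f t)) (g d f') s := by
  have h1 : HasDerivAt (fun t => (f t).1) f'.1 s := h.fst
  have h2 : HasDerivAt (fun t => (f t).2.1) f'.2.1 s := h.snd.fst
  have h3 : HasDerivAt (fun t => (f t).2.2) f'.2.2 s := h.snd.snd
  have := (((h1.const_mul d.1).neg).add (h2.const_mul d.2.1)).add (h3.const_mul d.2.2)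
  simpa [g, mul_comm, Pi.add_def, Pi.neg_def] using this

theorem stmt3 (ψ T N B : ℝ → ℝ × ℝ × ℝ) (κ : ℝ → ℝ) (d : ℝ × ℝ × ℝ) (n : ℝ)
    (hκ : ∀ s, κ s ≠ 0)
    (hT : ∀ s, deriv ψ s = T s)
    (hFr1 : ∀ s, deriv T s = κ s • N s)
    (hFr2 : ∀ s, deriv N s = (-(κ s)) • T s)
    (hFr3 : ∀ s, deriv B s = 0)
    (hTT : ∀ s, g (T s) (T s) = 1)
    (hNN : ∀ s, g (N s) (N s) = 1)
    (hBB : ∀ s, g (B s) (B s) = -1)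
    (hTN : ∀ s, g (T s) (N s) = 0)
    (hTB : ∀ s, g (T s) (B s) = 0)
    (hNB : ∀ s, g (N s) (B s) = 0)
    (hd : g d d = 1)
    (hdT : ∀ s, g d (T s) = n) (hn : |n| > 1) :
    False := by
  -- N s ≠ 0 and T s ≠ 0
  have hNne : ∀ s, N s ≠ 0 := by
    intro s h
    have := hNN s
    rw [h] at this
    simp [g] at this
  have hTne : ∀ s, T s ≠ 0 := by
    intro s h
    have := hTT s
    rw [h] at this
    simp [g] at this
  -- T differentiable with HasDerivAt
  have hTd : ∀ s, HasDerivAt T (κ s • N s) s := by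
    intro s
    have hdiff : DifferentiableAt ℝ T s := by
      by_contra h
      have h0 := deriv_zero_of_not_differentiableAt h
      rw [hFr1 s] at h0
      exact hNne s (by
        have := smul_eq_zero.mp h0
        rcases this with h | h
        · exact absurd h (hκ s)
        · exact h) |>.elim
    have := hdiff.hasDerivAt
    rwa [hFr1 s] at this
  have hNd : ∀ s, HasDerivAt N ((-(κ s)) • T s) s := by
    intro s
    have hdiff : DifferentiableAt ℝ N s := by
      by_contra h
      have h0 := deriv_zero_of_not_differentiableAt h
      rw [hFr2 s] at h0
      rcases smul_eq_zero.mp h0 with h | h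
      · exact hκ s (neg_eq_zero.mp h)
      · exact hTne s h
    have := hdiff.hasDerivAt
    rwa [hFr2 s] at this
  -- g d (N s) = 0
  have hgsmul : ∀ (c : ℝ) (v : ℝ × ℝ × ℝ), g d (c • v) = c * g d v := by
    intro c v; simp [g]; ring
  have hdN : ∀ s, g d (N s) = 0 := by
    intro s
    have h1 : HasDerivAt (fun t => g d (T t)) (g d (κ s • N s)) s := gd_hasDeriv d (hTd s)
    have h2 : (fun t => g d (T t)) = fun _ => n := funext hdT
    rw [h2] at h1
    have h3 : g d (κ s • N s) = 0 := by
      have := h1.deriv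
      simpa using this.symm
    rw [hgsmul] at h3
    exact (mul_eq_zero.mp h3).resolve_left (hκ s)
  -- differentiate again
  have s := (0 : ℝ)
  have h1 : HasDerivAt (fun t => g d (N t)) (g d ((-(κ 0)) • T 0)) 0 := gd_hasDeriv d (hNd 0)
  have h2 : (fun t => g d (N t)) = fun _ => (0 : ℝ) := funext hdN
  rw [h2] at h1
  have h3 : g d ((-(κ 0)) • T 0) = 0 := by simpa using h1.deriv.symm
  rw [hgsmul, hdT 0] at h3
  have hn0 : n = 0 := by
    rcases mul_eq_zero.mp h3 with h | h
    · exact absurd (neg_eq_zero.mp h) (hκ 0)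
    · exact h
  rw [hn0] at hn
  exact absurd hn (by norm_num)
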